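/- Let π be a positive density on a finite set Y, r : Y → ℝ, and define Z⁺ = Σ_y π(y)e^{r(y)}, Z⁻ = Σ_y π(y)e^{-r(y)}, π⁺(y) = π(y)e^{r(y)}/Z⁺, π⁻(y) = π(y)e^{-r(y)}/Z⁻, and p₀ = Z⁺Z⁻/(1 + Z⁺Z⁻). Define the mixture μ(a,b) = (1-p₀)·π(a)π(b) + p₀·π⁺(a)π⁻(b) and its symmetrization μ̄(a,b) = (μ(a,b)+μ(b,a))/2. Then for all a, b ∈ Y: μ̄(a,b) / (π(a)π(b)) = 1 / (2·(1 + Z⁺Z⁻)·σ'(r(a)-r(b))), where σ'(z) = 1/((1+e^{-z})(1+e^{z})). -/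

import Mathlib

open scoped BigOperators

noncomputable def sigmoid' (z : ℝ) : ℝ := 1 / ((1 + Real.exp (-z)) * (1 + Real.exp z))

/-- PILAF density-ratio formula: the symmetrized mixture of `π⊗π` and `π⁺⊗π⁻` satisfies
`μ̄(a,b)/(π(a)π(b)) = 1/(2(1+Z⁺Z⁻)σ'(r(a)-r(b)))`. -/
theorem pilaf_density_ratio {Y : Type*} [Fintype Y]
    (π : Y → ℝ) (hpos : ∀ y, 0 < π y) (hsum : ∑ y, π y = 1)
    (r : Y → ℝ)
    (Zp Zm : ℝ) (hZp : Zp = ∑ y, π y * Real.exp (r y))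
    (hZm : Zm = ∑ y, π y * Real.exp (-r y))
    (πp πm : Y → ℝ) (hπp : ∀ y, πp y = π y * Real.exp (r y) / Zp)
    (hπm : ∀ y, πm y = π y * Real.exp (-r y) / Zm)
    (p₀ : ℝ) (hp₀ : p₀ = Zp * Zm / (1 + Zp * Zm))
    (μ : Y → Y → ℝ) (hμ : ∀ a b, μ a b = (1 - p₀) * (π a * π b) + p₀ * (πp a * πm b))
    (μbar : Y → Y → ℝ) (hμbar : ∀ a b, μbar a b = (μ a b + μ b a) / 2) :
    ∀ a b : Y,
      μbar a b / (π a * π b) =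
        1 / (2 * (1 + Zp * Zm) * sigmoid' (r a - r b)) := by
  have hne : (Finset.univ : Finset Y).Nonempty := by
    by_contra h
    rw [Finset.not_nonempty_iff_eq_empty] at h
    rw [h, Finset.sum_empty] at hsum
    norm_num at hsum
  have hZp0 : 0 < Zp := by
    rw [hZp]; exact Finset.sum_pos (fun y _ => mul_pos (hpos y) (Real.exp_pos _)) hne
  have hZm0 : 0 < Zm := by
    rw [hZm]; exact Finset.sum_pos (fun y _ => mul_pos (hpos y) (Real.exp_pos _)) hne
  have hZZ : (0:ℝ) < 1 + Zp * Zm := by positivity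
  intro a b
  have hπa := (hpos a).ne'
  have hπb := (hpos b).ne'
  have hea : Real.exp (r a - r b) = Real.exp (r a) * Real.exp (-r b) := by
    rw [← Real.exp_add]; ring_nf
  have heb : Real.exp (-(r a - r b)) = Real.exp (r b) * Real.exp (-r a) := by
    rw [← Real.exp_add]; ring_nf
  rw [hμbar, hμ, hμ, hπp, hπp, hπm, hπm, hp₀, sigmoid', hea, heb]
  have hprod : Real.exp (r a) * Real.exp (-r b) * Real.exp (r b) * Real.exp (-r a) = 1 := by
    rw [← Real.exp_add, ← Real.exp_add, ← Real.exp_add]; simp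
  field_simp
  linear_combination (-1) * hprod
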